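/- Let S be a semigroup and s : ℕ → S a sequence whose image generates S as a semigroup. Then every submultiplicative seminorm on the semigroup algebra ℂS is dominated by a seminorm of the form ‖·‖_F: for every seminorm p on ℂS satisfying p(ab) ≤ p(a)p(b) for all a, b ∈ ℂS, there exists a function F : ℕ → [0,∞) such that p(a) ≤ ‖a‖_F for all a ∈ ℂS. (In particular, one may take F(n) = |log p(δ_{s_n})| whenever p(δ_{s_n}) > 0, which yields p(δ_t) ≤ e^{ℓ_F(t)} for every t ∈ S.) -/

import Mathlib

/-- The product `s n₀ * s n₁ * ⋯ * s nₘ` of a nonempty word `n₀ :: L` in the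
generators `s : ℕ → S`. -/
def wordProd {S : Type*} [Semigroup S] (s : ℕ → S) (n : ℕ) : List ℕ → S
  | [] => s n
  | m :: L => s n * wordProd s m L

/-- The cost `F n₀ + F n₁ + ⋯ + F nₘ` of a nonempty word `n₀ :: L`. -/
def wordCost (F : ℕ → ℝ) (n : ℕ) (L : List ℕ) : ℝ :=
  F n + (L.map F).sum

/-- `ℓ_F(t) = inf { F n₁ + ⋯ + F nₘ : m ≥ 1, t = s n₁ ⋯ s nₘ }`. -/
noncomputable def lenF {S : Type*} [Semigroup S] (s : ℕ → S) (F : ℕ → ℝ) (t : S) : ℝ :=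
  sInf { r : ℝ | ∃ n L, t = wordProd s n L ∧ r = wordCost F n L }

/-- `‖a‖_F = Σ_t |a_t| e^{ℓ_F(t)}` on the semigroup algebra `ℂS`. -/
noncomputable def normF {S : Type*} [Semigroup S] (s : ℕ → S) (F : ℕ → ℝ)
    (a : MonoidAlgebra ℂ S) : ℝ :=
  Finsupp.sum a.coeff fun t c => ‖c‖ * Real.exp (lenF s F t)

/-- Every submultiplicative seminorm `p` on the semigroup algebra `ℂS` is dominated
by a seminorm of the form `‖·‖_F`. -/
theorem seminorm_le_normF {S : Type*} [Semigroup S] (s : ℕ → S)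
    (hgen : ∀ t : S, ∃ n L, t = wordProd s n L)
    (p : MonoidAlgebra ℂ S → ℝ)
    (hhom : ∀ (c : ℂ) (a : MonoidAlgebra ℂ S), p (c • a) = ‖c‖ * p a)
    (htri : ∀ a b : MonoidAlgebra ℂ S, p (a + b) ≤ p a + p b)
    (hsub : ∀ a b : MonoidAlgebra ℂ S, p (a * b) ≤ p a * p b) :
    ∃ F : ℕ → ℝ, (∀ n, 0 ≤ F n) ∧ ∀ a : MonoidAlgebra ℂ S, p a ≤ normF s F a := by
  classical
  have hp0 : p 0 = 0 := by
    have := hhom 0 0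
    simpa using this
  have hneg : ∀ a, p (-a) = p a := by
    intro a
    have := hhom (-1) a
    simpa using this
  have hnn : ∀ a, 0 ≤ p a := by
    intro a
    have h := htri a (-a)
    rw [add_neg_cancel, hp0, hneg] at h
    linarith
  set F : ℕ → ℝ := fun n => max 0 (Real.log (p (MonoidAlgebra.single (s n) 1))) with hF
  have hF0 : ∀ n, 0 ≤ F n := fun n => le_max_left _ _
  have hFexp : ∀ n, p (MonoidAlgebra.single (s n) 1) ≤ Real.exp (F n) := by
    intro n
    rcases eq_or_lt_of_le (hnn (MonoidAlgebra.single (s n) 1)) with h | h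
    · rw [← h]; exact (Real.exp_pos _).le
    · calc p (MonoidAlgebra.single (s n) 1)
          = Real.exp (Real.log (p (MonoidAlgebra.single (s n) 1))) := (Real.exp_log h).symm
        _ ≤ Real.exp (F n) := Real.exp_le_exp.2 (le_max_right _ _)
  have hword : ∀ (L : List ℕ) (n : ℕ),
      p (MonoidAlgebra.single (wordProd s n L) 1) ≤ Real.exp (wordCost F n L) := by
    intro L
    induction L with
    | nil => intro n; simpa [wordProd, wordCost] using hFexp n
    | cons m L ih =>
      intro n
      have hmul : (MonoidAlgebra.single (wordProd s n (m :: L)) (1 : ℂ)) =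
          MonoidAlgebra.single (s n) 1 * MonoidAlgebra.single (wordProd s m L) 1 := by
        rw [MonoidAlgebra.single_mul_single]
        simp [wordProd]
      rw [hmul]
      calc p (MonoidAlgebra.single (s n) 1 * MonoidAlgebra.single (wordProd s m L) 1)
          ≤ p (MonoidAlgebra.single (s n) 1) * p (MonoidAlgebra.single (wordProd s m L) 1) :=
            hsub _ _
        _ ≤ Real.exp (F n) * Real.exp (wordCost F m L) :=
            mul_le_mul (hFexp n) (ih m) (hnn _) (Real.exp_pos _).le
        _ = Real.exp (F n + wordCost F m L) := (Real.exp_add _ _).symm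
        _ = Real.exp (wordCost F n (m :: L)) := by simp [wordCost, add_assoc]
  have hdelta : ∀ t : S, p (MonoidAlgebra.single t 1) ≤ Real.exp (lenF s F t) := by
    intro t
    obtain ⟨n, L, hnL⟩ := hgen t
    have hne : {r : ℝ | ∃ n L, t = wordProd s n L ∧ r = wordCost F n L}.Nonempty :=
      ⟨_, n, L, hnL, rfl⟩
    rcases eq_or_lt_of_le (hnn (MonoidAlgebra.single t 1)) with h | h
    · rw [← h]; exact (Real.exp_pos _).le
    · have hlb : Real.log (p (MonoidAlgebra.single t 1)) ≤ lenF s F t := by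
        apply le_csInf hne
        rintro r ⟨n', L', ht, rfl⟩
        rw [Real.log_le_iff_le_exp h, ht]
        exact hword L' n'
      calc p (MonoidAlgebra.single t 1)
          = Real.exp (Real.log (p (MonoidAlgebra.single t 1))) := (Real.exp_log h).symm
        _ ≤ Real.exp (lenF s F t) := Real.exp_le_exp.2 hlb
  refine ⟨F, hF0, ?_⟩
  intro a
  have hsumle : ∀ (u : Finset S) (f : S → MonoidAlgebra ℂ S),
      p (∑ t ∈ u, f t) ≤ ∑ t ∈ u, p (f t) := by
    intro u f
    induction u using Finset.induction with
    | empty => simp [hp0]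
    | insert _ _ h ih =>
      rw [Finset.sum_insert h, Finset.sum_insert h]
      exact le_trans (htri _ _) (by linarith)
  have hsingle : ∀ (t : S) (c : ℂ),
      p (MonoidAlgebra.single t c) = ‖c‖ * p (MonoidAlgebra.single t 1) := by
    intro t c
    have : (MonoidAlgebra.single t c : MonoidAlgebra ℂ S) = c • MonoidAlgebra.single t 1 := by
      rw [MonoidAlgebra.smul_single']
      simp
    rw [this, hhom]
  calc p a = p (∑ t ∈ a.coeff.support, MonoidAlgebra.single t (a.coeff t)) := by
        conv_lhs => rw [← MonoidAlgebra.sum_coeff_single a]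
        rfl
    _ ≤ ∑ t ∈ a.coeff.support, p (MonoidAlgebra.single t (a.coeff t)) := hsumle _ _
    _ ≤ ∑ t ∈ a.coeff.support, ‖a.coeff t‖ * Real.exp (lenF s F t) := by
        refine Finset.sum_le_sum fun t _ => ?_
        rw [hsingle]
        exact mul_le_mul_of_nonneg_left (hdelta t) (norm_nonneg _)
    _ = normF s F a := rfl
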